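/- If S and T are symmetric bilinear forms on a finite-dimensional inner product space with S∘T = 0 (composition as endomorphisms), then (S∧S)∘(S∧S) = 2 S²∧S², (S∧S)∘(S∧T) = 0, (S∧S)∘(T∧T) = 0, and (S∧T)∘(S∧T) = S²∧T², where S² = S∘S. -/
import Mathlib


open Finset

/-- Kulkarni–Nomizu product of two 2-tensors: (S∧T)_{ijkl}. -/
def KN {n : ℕ} (S T : Fin n → Fin n → ℝ) : Fin n → Fin n → Fin n → Fin n → ℝ :=
  fun i j k l => S i k * T j l + S j l * T i k - S i l * T j k - S j k * T i l

/-- Composition of 2-tensors (as endomorphisms, indices raised by the standard metric). -/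
noncomputable def comp2 {n : ℕ} (S T : Fin n → Fin n → ℝ) : Fin n → Fin n → ℝ :=
  fun i j => ∑ u, S i u * T u j

/-- Composition of curvature-type 4-tensors: (A∘B)_{ijkl} = (1/2) A_{ij}^{uv} B_{uvkl}. -/
noncomputable def comp4 {n : ℕ} (A B : Fin n → Fin n → Fin n → Fin n → ℝ) :
    Fin n → Fin n → Fin n → Fin n → ℝ :=
  fun i j k l => (1 / 2 : ℝ) * ∑ u, ∑ v, A i j u v * B u v k l

/-- Partial (Ricci-type) trace of a 4-tensor: (tr A)_{ij} = A_{iuj}^{u}. -/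
noncomputable def ptr {n : ℕ} (A : Fin n → Fin n → Fin n → Fin n → ℝ) :
    Fin n → Fin n → ℝ :=
  fun i j => ∑ u, A i u j u

/-- Full trace of a 2-tensor. -/
noncomputable def tr2 {n : ℕ} (S : Fin n → Fin n → ℝ) : ℝ := ∑ i, S i i

/-- Inner product of 2-tensors (standard metric). -/
noncomputable def inner2 {n : ℕ} (S T : Fin n → Fin n → ℝ) : ℝ := ∑ i, ∑ j, S i j * T i j

/-- General factorization of comp4 of two Kulkarni–Nomizu products. -/
lemma comp4_KN_KN {n : ℕ} (A B C D : Fin n → Fin n → ℝ) (i j k l : Fin n) :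
    comp4 (KN A B) (KN C D) i j k l =
      comp2 A C i k * comp2 B D j l + comp2 A D i k * comp2 B C j l
      + comp2 B C i k * comp2 A D j l + comp2 B D i k * comp2 A C j l
      - comp2 A C i l * comp2 B D j k - comp2 A D i l * comp2 B C j k
      - comp2 B C i l * comp2 A D j k - comp2 B D i l * comp2 A C j k := by
  have h : ∑ u, ∑ v, KN A B i j u v * KN C D u v k l =
      comp2 A C i k * comp2 B D j l + comp2 A D i k * comp2 B C j l
      - comp2 A C i l * comp2 B D j k - comp2 A D i l * comp2 B C j k
      + comp2 B C i k * comp2 A D j l + comp2 B D i k * comp2 A C j l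
      - comp2 B C i l * comp2 A D j k - comp2 B D i l * comp2 A C j k
      - comp2 B C j k * comp2 A D i l - comp2 B D j k * comp2 A C i l
      + comp2 B C j l * comp2 A D i k + comp2 B D j l * comp2 A C i k
      - comp2 A C j k * comp2 B D i l - comp2 A D j k * comp2 B C i l
      + comp2 A C j l * comp2 B D i k + comp2 A D j l * comp2 B C i k := by
    simp only [comp2, KN, Finset.sum_mul_sum, ← Finset.sum_add_distrib, ← Finset.sum_sub_distrib]
    exact Finset.sum_congr rfl fun u _ => Finset.sum_congr rfl fun v _ => by ring
  simp only [comp4, h]; ring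

theorem stmt1 {n : ℕ} (S T : Fin n → Fin n → ℝ)
    (hS : ∀ i j, S i j = S j i) (hT : ∀ i j, T i j = T j i)
    (hST : comp2 S T = fun _ _ => 0) :
    (comp4 (KN S S) (KN S S) =
      fun i j k l => 2 * KN (comp2 S S) (comp2 S S) i j k l) ∧
    (comp4 (KN S S) (KN S T) = fun _ _ _ _ => 0) ∧
    (comp4 (KN S S) (KN T T) = fun _ _ _ _ => 0) ∧
    (comp4 (KN S T) (KN S T) = KN (comp2 S S) (comp2 T T)) := by
  have hST' : ∀ i j, comp2 S T i j = 0 := fun i j => congrFun (congrFun hST i) j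
  have hTS : ∀ i j, comp2 T S i j = 0 := by
    intro i j
    have : comp2 T S i j = comp2 S T j i := by
      simp only [comp2]
      exact Finset.sum_congr rfl fun u _ => by rw [hS, hT]; ring
    rw [this, hST']
  refine ⟨?_, ?_, ?_, ?_⟩ <;> funext i j k l <;> rw [comp4_KN_KN] <;>
    simp only [hST', hTS, KN] <;> ring
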